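/- Two probability distributions π and π' on the path set 𝒫 of a directed acyclic graph are path decompositions of the same quasi-flow if and only if there exists a finite sequence of Ryser swaps R_1, …, R_m and positive coefficients c_1, …, c_m > 0 such that π + Σ_i c_i R_i = π'. -/

import Mathlib

set_option linter.unusedSectionVars false
set_option maxHeartbeats 1000000


open scoped Classical

namespace StmtDAG

open Relation List

variable {N E : Type*} [Fintype N] [Fintype E] [DecidableEq N] [DecidableEq E]

/-- `(src, tgt, s, t)` describes a directed acyclic graph with finite node type `N` and
finite edge type `E` (parallel edges are allowed, since `E` is an abstract type with
endpoint maps): there is no directed cycle, `s` is the unique node with no incoming edge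
(the source), and `t` is the unique node with no outgoing edge (the sink). -/
def IsDAG (src tgt : E → N) (s t : N) : Prop :=
  (∀ a : N, ¬ Relation.TransGen (fun a b => ∃ e, src e = a ∧ tgt e = b) a a) ∧
  (∀ e, tgt e ≠ s) ∧ (∀ e, src e ≠ t) ∧
  (∀ n, (∀ e, tgt e ≠ n) → n = s) ∧
  (∀ n, (∀ e, src e ≠ n) → n = t)

variable (src tgt : E → N) (s t : N)

/-- A path from `s` to `t`: a nonempty list of consecutive edges starting at `s` and
ending at `t`.  (In a DAG these are in bijective correspondence with the edge *sets* in
which `s` and `t` each appear exactly once and every other node appearing at all appears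
exactly once as a head and once as a tail.) -/
structure GPath where
  /-- the edges of the path, in order from the source to the sink -/
  edges : List E
  ne : edges ≠ []
  chain : edges.Chain' fun e f => tgt e = src f
  first : src (edges.head ne) = s
  last : tgt (edges.getLast ne) = t

/-- A quasi-flow: a nonnegative edge weighting such that, at every node other than the
source and the sink, total in-flow equals total out-flow. -/
def IsQuasiFlow (f : E → ℝ) : Prop :=
  (∀ e, 0 ≤ f e) ∧
  ∀ n : N, n ≠ s → n ≠ t →
    (∑ e : E, if tgt e = n then f e else 0) = (∑ e : E, if src e = n then f e else 0)

/-- `π` is a path decomposition of the quasi-flow `f`: a nonnegative weighting of paths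
whose induced edge weights recover `f`. -/
def IsPathDecomp (f : E → ℝ) (π : GPath src tgt s t → ℝ) : Prop :=
  (∀ P, 0 ≤ π P) ∧
  ∀ e : E, f e = ∑ᶠ P : GPath src tgt s t, if e ∈ P.edges then π P else 0

/-- `P.edges = a ++ b`, split exactly at the node `n`. -/
def SplitsAt (P : GPath src tgt s t) (n : N) (a b : List E) : Prop :=
  P.edges = a ++ b ∧ (∀ h : b ≠ [], src (b.head h) = n) ∧ (b = [] → n = t)

/-- `(Q₁, Q₂)` are the `n`-conjugates of the pair `(P₁, P₂)`, both of which pass through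
the node `n`: `Q₁` follows `P₁` up to `n` and `P₂` thereafter, and vice versa. -/
def IsConjAt (n : N) (P₁ P₂ Q₁ Q₂ : GPath src tgt s t) : Prop :=
  ∃ a₁ b₁ a₂ b₂ : List E,
    SplitsAt src tgt s t P₁ n a₁ b₁ ∧ SplitsAt src tgt s t P₂ n a₂ b₂ ∧
    Q₁.edges = a₁ ++ b₂ ∧ Q₂.edges = a₂ ++ b₁

/-- The indicator (point mass) vector of a path. -/
noncomputable def indP (P₀ : GPath src tgt s t) : GPath src tgt s t → ℝ :=
  fun P => if P = P₀ then 1 else 0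

/-- A Ryser swap: `1_{Q₁} + 1_{Q₂} - 1_{P₁} - 1_{P₂}` where `(Q₁, Q₂)` are the
`n`-conjugates of a pair `(P₁, P₂)` compatible at some node `n`. -/
def IsRyserSwap (R : GPath src tgt s t → ℝ) : Prop :=
  ∃ (n : N) (P₁ P₂ Q₁ Q₂ : GPath src tgt s t),
    IsConjAt src tgt s t n P₁ P₂ Q₁ Q₂ ∧
    R = indP src tgt s t Q₁ + indP src tgt s t Q₂ -
          indP src tgt s t P₁ - indP src tgt s t P₂

/-- The Ryser subspace: the linear span of all Ryser swaps. -/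
noncomputable def RyserSub : Submodule ℝ (GPath src tgt s t → ℝ) :=
  Submodule.span ℝ {R | IsRyserSwap src tgt s t R}

/-- `π` is a probability distribution on the path set. -/
def IsDistP (π : GPath src tgt s t → ℝ) : Prop :=
  (∀ P, 0 ≤ π P) ∧ ∑ᶠ P : GPath src tgt s t, π P = 1


section Aux

variable {N E : Type*} [Fintype N] [Fintype E] [DecidableEq N] [DecidableEq E]
variable {src tgt : E → N} {s t : N}

/-- one-step reachability between nodes -/
def Step (src tgt : E → N) (a b : N) : Prop := ∃ e, src e = a ∧ tgt e = b

lemma reach_getLast {l : List E} :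
    (l.Chain' fun e f => tgt e = src f) → ∀ {e : E}, e ∈ l → ∀ h : l ≠ [],
    ReflTransGen (Step src tgt) (tgt e) (tgt (l.getLast h)) := by
  induction l with
  | nil => intro _ e he; exact absurd he (by simp)
  | cons a rest ih =>
    intro hc e he h
    rcases eq_or_ne rest [] with rfl | hrest
    · simp only [mem_singleton] at he; subst he; exact ReflTransGen.refl
    · have hgl : (a :: rest).getLast h = rest.getLast hrest := List.getLast_cons hrest
      rw [hgl]
      rcases List.mem_cons.1 he with rfl | hm
      · have hh : rest.head hrest ∈ rest := List.head_mem hrest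
        have hR : tgt e = src (rest.head hrest) :=
          (List.isChain_cons.1 hc).1 _ (by rw [List.head?_eq_head hrest]; rfl)
        exact ReflTransGen.head ⟨rest.head hrest, hR.symm, rfl⟩
          (ih (List.isChain_cons.1 hc).2 hh hrest)
      · exact ih (List.isChain_cons.1 hc).2 hm hrest

lemma reach_head {l : List E} :
    (l.Chain' fun e f => tgt e = src f) → ∀ {e : E}, e ∈ l → ∀ h : l ≠ [],
    ReflTransGen (Step src tgt) (src (l.head h)) (src e) := by
  induction l with
  | nil => intro _ e he; exact absurd he (by simp)
  | cons a rest ih =>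
    intro hc e he h
    rcases List.mem_cons.1 he with rfl | hm
    · exact ReflTransGen.refl
    · have hrest : rest ≠ [] := ne_nil_of_mem hm
      have hR : tgt a = src (rest.head hrest) :=
        (List.isChain_cons.1 hc).1 _ (by rw [List.head?_eq_head hrest]; rfl)
      simp only [List.head_cons]
      refine ReflTransGen.head ⟨a, rfl, rfl⟩ ?_
      have := ih (List.isChain_cons.1 hc).2 hm hrest
      rwa [← hR] at this

/-- along a chain, a later edge's source is strictly reachable from an earlier edge's
source -/
lemma transGen_of_mem_tail {a : E} {rest : List E} :
    ((a :: rest).Chain' fun e f => tgt e = src f) → ∀ {e : E}, e ∈ rest →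
    TransGen (Step src tgt) (src a) (src e) := by
  intro hc e he
  have hrest : rest ≠ [] := ne_nil_of_mem he
  have hR : tgt a = src (rest.head hrest) :=
    (List.isChain_cons.1 hc).1 _ (by rw [List.head?_eq_head hrest]; rfl)
  refine TransGen.head' ⟨a, rfl, rfl⟩ ?_
  have := reach_head (List.isChain_cons.1 hc).2 he hrest
  rwa [← hR] at this

lemma transGen_tgt_of_mem_tail {a : E} {rest : List E} :
    ((a :: rest).Chain' fun e f => tgt e = src f) → ∀ {e : E}, e ∈ rest →
    TransGen (Step src tgt) (tgt a) (tgt e) := by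
  intro hc e he
  have hrest : rest ≠ [] := ne_nil_of_mem he
  have hR : tgt a = src (rest.head hrest) :=
    (List.isChain_cons.1 hc).1 _ (by rw [List.head?_eq_head hrest]; rfl)
  have h1 : ReflTransGen (Step src tgt) (tgt a) (src e) := by
    have := reach_head (List.isChain_cons.1 hc).2 he hrest
    rwa [← hR] at this
  exact TransGen.trans_right h1 (TransGen.single ⟨e, rfl, rfl⟩)

variable (hacyc : ∀ a : N, ¬ TransGen (Step src tgt) a a)

include hacyc

lemma src_inj_of_chain {l : List E} :
    (l.Chain' fun e f => tgt e = src f) → ∀ {e f : E}, e ∈ l → f ∈ l →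
    src e = src f → e = f := by
  induction l with
  | nil => intro _ e f he; exact absurd he (by simp)
  | cons a rest ih =>
    intro hc e f he hf hsrc
    rcases List.mem_cons.1 he with rfl | hme <;> rcases List.mem_cons.1 hf with rfl | hmf
    · rfl
    · exact absurd (hsrc ▸ transGen_of_mem_tail hc hmf) (hacyc _)
    · exact absurd (hsrc ▸ transGen_of_mem_tail hc hme) (hacyc _)
    · exact ih (List.isChain_cons.1 hc).2 hme hmf hsrc

lemma tgt_inj_of_chain {l : List E} :
    (l.Chain' fun e f => tgt e = src f) → ∀ {e f : E}, e ∈ l → f ∈ l →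
    tgt e = tgt f → e = f := by
  induction l with
  | nil => intro _ e f he; exact absurd he (by simp)
  | cons a rest ih =>
    intro hc e f he hf htgt
    rcases List.mem_cons.1 he with rfl | hme <;> rcases List.mem_cons.1 hf with rfl | hmf
    · rfl
    · exact absurd (htgt ▸ transGen_tgt_of_mem_tail hc hmf) (hacyc _)
    · exact absurd (htgt ▸ transGen_tgt_of_mem_tail hc hme) (hacyc _)
    · exact ih (List.isChain_cons.1 hc).2 hme hmf htgt

lemma nodup_of_chain {l : List E} (hc : l.Chain' fun e f => tgt e = src f) : l.Nodup := by
  induction l with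
  | nil => exact List.nodup_nil
  | cons a rest ih =>
    refine List.nodup_cons.2 ⟨fun hmem => ?_, ih (List.isChain_cons.1 hc).2⟩
    exact hacyc _ (transGen_of_mem_tail hc hmem)


omit hacyc


variable {src tgt : E → N} {s t : N}

lemma GPath.ext' {P Q : GPath src tgt s t} (h : P.edges = Q.edges) : P = Q := by
  cases P; cases Q; cases h; rfl

lemma hacyc_of_dag (hdag : IsDAG src tgt s t) : ∀ a : N, ¬ TransGen (Step src tgt) a a :=
  hdag.1

lemma finite_gpath (hdag : IsDAG src tgt s t) : Finite (GPath src tgt s t) := by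
  have hfin : {l : List E | l.length ≤ Fintype.card E}.Finite :=
    List.finite_length_le E (Fintype.card E)
  haveI : Finite {l : List E // l.length ≤ Fintype.card E} := hfin.to_subtype
  refine Finite.of_injective (fun P : GPath src tgt s t =>
    (⟨P.edges, (nodup_of_chain hdag.1 P.chain).length_le_card⟩ :
      {l : List E // l.length ≤ Fintype.card E})) ?_
  intro P Q h
  exact GPath.ext' (congrArg Subtype.val h)

-- counting lemma for flow conservation
lemma count_lemma (hdag : IsDAG src tgt s t) (P : GPath src tgt s t) {n : N}
    (hns : n ≠ s) (hnt : n ≠ t) (c : ℝ) :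
    (∑ e : E, if tgt e = n ∧ e ∈ P.edges then c else 0)
      = ∑ e : E, if src e = n ∧ e ∈ P.edges then c else 0 := by
  by_cases hex : ∃ e ∈ P.edges, tgt e = n
  · obtain ⟨e₀, he₀, htgt₀⟩ := hex
    -- existence of outgoing edge
    have hsrc : ∃ f ∈ P.edges, src f = n := by
      -- e₀ is not the last edge
      have : ∃ f ∈ P.edges, src f = tgt e₀ := by
        -- use chain structure : find successor of e₀
        clear hns
        have hc := P.chain
        have hne := P.ne
        have hlast := P.last
        have : tgt e₀ ≠ tgt (P.edges.getLast hne) := by rw [hlast, htgt₀]; exact hnt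
        -- general list lemma inline
        revert hc hne this he₀
        generalize P.edges = l
        induction l with
        | nil => intro h; exact absurd h (by simp)
        | cons a rest ih =>
          intro he₀ hc hne hlast'
          rcases eq_or_ne rest [] with rfl | hrest
          · simp only [mem_singleton] at he₀; subst he₀
            exact absurd rfl hlast'
          · rcases List.mem_cons.1 he₀ with rfl | hm
            · refine ⟨rest.head hrest, List.mem_cons_of_mem _ (List.head_mem hrest), ?_⟩
              exact ((List.isChain_cons.1 hc).1 _ (by rw [List.head?_eq_head hrest]; rfl)).symm
            · have hl : (a :: rest).getLast hne = rest.getLast hrest := List.getLast_cons hrest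
              rw [hl] at hlast'
              obtain ⟨f, hf, hf'⟩ := ih hm (List.isChain_cons.1 hc).2 hrest hlast'
              exact ⟨f, List.mem_cons_of_mem _ hf, hf'⟩
      obtain ⟨f, hf, hf'⟩ := this
      exact ⟨f, hf, by rw [hf', htgt₀]⟩
    obtain ⟨f₀, hf₀, hsrc₀⟩ := hsrc
    have h1 : (Finset.univ.filter fun e => tgt e = n ∧ e ∈ P.edges) = {e₀} := by
      refine Finset.eq_singleton_iff_unique_mem.2 ⟨by simp [he₀, htgt₀], fun x hx => ?_⟩
      simp only [Finset.mem_filter] at hx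
      exact tgt_inj_of_chain hdag.1 P.chain hx.2.2 he₀ (hx.2.1.trans htgt₀.symm)
    have h2 : (Finset.univ.filter fun e => src e = n ∧ e ∈ P.edges) = {f₀} := by
      refine Finset.eq_singleton_iff_unique_mem.2 ⟨by simp [hf₀, hsrc₀], fun x hx => ?_⟩
      simp only [Finset.mem_filter] at hx
      exact src_inj_of_chain hdag.1 P.chain hx.2.2 hf₀ (hx.2.1.trans hsrc₀.symm)
    rw [← Finset.sum_filter, ← Finset.sum_filter, h1, h2]
    simp
  · have hsrc : ¬ ∃ f ∈ P.edges, src f = n := by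
      rintro ⟨f, hf, hsrc'⟩
      -- f is not the first edge since n ≠ s; predecessor has tgt = n
      have hc := P.chain
      have hne := P.ne
      have hfirst := P.first
      have hhead : src f ≠ src (P.edges.head hne) := by rw [hfirst, hsrc']; exact hns
      apply hex
      revert hc hne hhead hf
      generalize P.edges = l
      induction l with
      | nil => intro h; exact absurd h (by simp)
      | cons a rest ih =>
        intro hf hc hne hhead
        rcases List.mem_cons.1 hf with rfl | hm
        · exact absurd (rfl : src f = src f) (by simpa using hhead)
        · have hrest : rest ≠ [] := ne_nil_of_mem hm
          by_cases hsf : src f = src (rest.head hrest)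
          · refine ⟨a, List.mem_cons_self, ?_⟩
            rw [← hsrc', hsf]
            exact ((List.isChain_cons.1 hc).1 _ (by rw [List.head?_eq_head hrest]; rfl))
          · obtain ⟨e, he, he'⟩ := ih hm (List.isChain_cons.1 hc).2 hrest (by simpa using hsf)
            exact ⟨e, List.mem_cons_of_mem _ he, he'⟩
    push_neg at hex hsrc
    rw [← Finset.sum_filter, ← Finset.sum_filter]
    have h1 : (Finset.univ.filter fun e => tgt e = n ∧ e ∈ P.edges) = ∅ := by
      ext x; simp only [Finset.mem_filter, Finset.notMem_empty, iff_false]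
      rintro ⟨_, h, h'⟩; exact hex _ h' h
    have h2 : (Finset.univ.filter fun e => src e = n ∧ e ∈ P.edges) = ∅ := by
      ext x; simp only [Finset.mem_filter, Finset.notMem_empty, iff_false]
      rintro ⟨_, h, h'⟩; exact hsrc _ h' h
    rw [h1, h2]



lemma reach_of_mem_split_left {P : GPath src tgt s t} {n : N} {a b : List E}
    (hs : SplitsAt src tgt s t P n a b) {e : E} (he : e ∈ a) :
    ReflTransGen (Step src tgt) (tgt e) n := by
  obtain ⟨hedges, hb, hbnil⟩ := hs
  have hchain : (a ++ b).Chain' fun e f => tgt e = src f := hedges ▸ P.chain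
  have hca : a.Chain' fun e f => tgt e = src f := (List.isChain_append.1 hchain).1
  have hane : a ≠ [] := ne_nil_of_mem he
  have h1 : ReflTransGen (Step src tgt) (tgt e) (tgt (a.getLast hane)) :=
    reach_getLast hca he hane
  rcases eq_or_ne b [] with rfl | hbne
  · have h2 : some (a.getLast hane) = some (P.edges.getLast P.ne) := by
      rw [← List.getLast?_eq_getLast, ← List.getLast?_eq_getLast, hedges, List.append_nil]
    have h3 := Option.some.inj h2
    rw [h3, P.last, ← hbnil rfl] at h1
    exact h1
  · have hlink : tgt (a.getLast hane) = src (b.head hbne) := by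
      have := (List.isChain_append.1 hchain).2.2
      exact this _ (by rw [List.getLast?_eq_getLast hane]; rfl) _
        (by rw [List.head?_eq_head hbne]; rfl)
    rw [hlink, hb hbne] at h1
    exact h1

lemma reach_of_mem_split_right {P : GPath src tgt s t} {n : N} {a b : List E}
    (hs : SplitsAt src tgt s t P n a b) {e : E} (he : e ∈ b) :
    ReflTransGen (Step src tgt) n (src e) := by
  obtain ⟨hedges, hb, hbnil⟩ := hs
  have hchain : (a ++ b).Chain' fun e f => tgt e = src f := hedges ▸ P.chain
  have hcb : b.Chain' fun e f => tgt e = src f := (List.isChain_append.1 hchain).2.1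
  have hbne : b ≠ [] := ne_nil_of_mem he
  have := reach_head hcb he hbne
  rwa [hb hbne] at this

lemma split_cross_false (hdag : IsDAG src tgt s t) {P P' : GPath src tgt s t} {n : N}
    {a b a' b' : List E} (hs : SplitsAt src tgt s t P n a b)
    (hs' : SplitsAt src tgt s t P' n a' b') {e : E} (hea : e ∈ a) (heb : e ∈ b') :
    False := by
  have h1 : ReflTransGen (Step src tgt) (tgt e) n := reach_of_mem_split_left hs hea
  have h2 : ReflTransGen (Step src tgt) n (src e) := reach_of_mem_split_right hs' heb
  have : TransGen (Step src tgt) n n :=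
    TransGen.trans_right h2 (TransGen.head' ⟨e, rfl, rfl⟩ h1)
  exact hdag.1 n this

lemma sum_ind (P₀ : GPath src tgt s t) [Fintype (GPath src tgt s t)] (e : E) :
    (∑ P : GPath src tgt s t, if e ∈ P.edges then indP src tgt s t P₀ P else 0)
      = if e ∈ P₀.edges then 1 else 0 := by
  rw [Finset.sum_congr rfl (fun P _ => show (if e ∈ P.edges then indP src tgt s t P₀ P else 0)
      = if P = P₀ then (if e ∈ P₀.edges then 1 else 0) else 0 by
    unfold indP; split_ifs with h1 h2 h2 <;> simp_all)]
  simp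

lemma swap_marg (hdag : IsDAG src tgt s t) [Fintype (GPath src tgt s t)]
    {R : GPath src tgt s t → ℝ} (hR : IsRyserSwap src tgt s t R) (e : E) :
    (∑ P : GPath src tgt s t, if e ∈ P.edges then R P else 0) = 0 := by
  obtain ⟨n, P₁, P₂, Q₁, Q₂, ⟨a₁, b₁, a₂, b₂, hs₁, hs₂, hq₁, hq₂⟩, rfl⟩ := hR
  have key : ∀ P : GPath src tgt s t,
      (if e ∈ P.edges then (indP src tgt s t Q₁ + indP src tgt s t Q₂ -
          indP src tgt s t P₁ - indP src tgt s t P₂) P else 0)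
        = (if e ∈ P.edges then indP src tgt s t Q₁ P else 0)
          + (if e ∈ P.edges then indP src tgt s t Q₂ P else 0)
          - (if e ∈ P.edges then indP src tgt s t P₁ P else 0)
          - (if e ∈ P.edges then indP src tgt s t P₂ P else 0) := by
    intro P; simp only [Pi.add_apply, Pi.sub_apply]; split_ifs <;> ring
  rw [Finset.sum_congr rfl fun P _ => key P]
  rw [Finset.sum_sub_distrib, Finset.sum_sub_distrib, Finset.sum_add_distrib,
    sum_ind, sum_ind, sum_ind, sum_ind]
  have hA : ¬(e ∈ a₁ ∧ e ∈ b₁) := fun ⟨h1, h2⟩ => split_cross_false hdag hs₁ hs₁ h1 h2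
  have hB : ¬(e ∈ a₁ ∧ e ∈ b₂) := fun ⟨h1, h2⟩ => split_cross_false hdag hs₁ hs₂ h1 h2
  have hC : ¬(e ∈ a₂ ∧ e ∈ b₁) := fun ⟨h1, h2⟩ => split_cross_false hdag hs₂ hs₁ h1 h2
  have hD : ¬(e ∈ a₂ ∧ e ∈ b₂) := fun ⟨h1, h2⟩ => split_cross_false hdag hs₂ hs₂ h1 h2
  rw [hs₁.1, hs₂.1, hq₁, hq₂]
  simp only [List.mem_append]
  by_cases p1 : e ∈ a₁ <;> by_cases p2 : e ∈ b₁ <;> by_cases p3 : e ∈ a₂ <;>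
    by_cases p4 : e ∈ b₂ <;> simp_all <;> ring


section WF
variable (hdag : IsDAG src tgt s t)

lemma wf_fwd (hdag : IsDAG src tgt s t) :
    WellFounded (fun x y : N => Step src tgt y x) := by
  have hir : IsIrrefl N (TransGen fun x y : N => Step src tgt y x) := by
    constructor; intro a ha
    exact hdag.1 a (by rwa [show (fun x y : N => Step src tgt y x) = Function.swap (Step src tgt) from rfl, Relation.transGen_swap] at ha)
  have htr : IsTrans N (TransGen fun x y : N => Step src tgt y x) := inferInstance
  have hwf := Finite.wellFounded_of_trans_of_irrefl (TransGen fun x y : N => Step src tgt y x)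
  refine Subrelation.wf ?_ hwf
  intro x y h; exact TransGen.single h

lemma wf_bwd (hdag : IsDAG src tgt s t) :
    WellFounded (fun x y : N => Step src tgt x y) := by
  have hir : IsIrrefl N (TransGen fun x y : N => Step src tgt x y) := ⟨fun a ha => hdag.1 a ha⟩
  have hwf := Finite.wellFounded_of_trans_of_irrefl (TransGen fun x y : N => Step src tgt x y)
  refine Subrelation.wf ?_ hwf
  intro x y h; exact TransGen.single h

/-- canonical path onward from a node to `t` -/
noncomputable def fwd (hdag : IsDAG src tgt s t) : N → List E :=
  (wf_fwd hdag).fix (fun n ih =>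
    if h : ∃ e, src e = n then
      h.choose :: ih (tgt h.choose) ⟨h.choose, h.choose_spec, rfl⟩
    else [])

lemma fwd_eq (n : N) : fwd hdag n =
    if h : ∃ e, src e = n then h.choose :: fwd hdag (tgt h.choose) else [] := by
  unfold fwd
  rw [WellFounded.fix_eq]

lemma fwd_spec : ∀ n : N,
    ((fwd hdag n).Chain' fun e f => tgt e = src f) ∧
    (fwd hdag n = [] → n = t) ∧
    (∀ h : fwd hdag n ≠ [], src ((fwd hdag n).head h) = n) ∧
    (∀ h : fwd hdag n ≠ [], tgt ((fwd hdag n).getLast h) = t) := by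
  intro n
  induction n using (wf_fwd hdag).induction with
  | _ n ih =>
  rw [fwd_eq]
  split_ifs with h
  · set e := h.choose with he
    have hsrc : src e = n := h.choose_spec
    obtain ⟨ihc, ihnil, ihhead, ihlast⟩ := ih (tgt e) ⟨e, hsrc, rfl⟩
    refine ⟨?_, by simp, fun _ => by simp [h.choose_spec], fun _ => ?_⟩
    · simp only [List.Chain']; rw [List.isChain_cons]
      refine ⟨fun y hy => ?_, ihc⟩
      rcases eq_or_ne (fwd hdag (tgt e)) [] with hnil | hne
      · rw [hnil] at hy; simp at hy
      · rw [List.head?_eq_head hne] at hy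
        have hy' : (fwd hdag (tgt e)).head hne = y := Option.some.inj (Option.mem_def.1 hy)
        rw [← hy', ihhead hne, ← he]
    · rcases eq_or_ne (fwd hdag (tgt e)) [] with hnil | hne
      · have hnt : tgt e = t := ihnil hnil
        simp only [show fwd hdag (tgt h.choose) = [] from hnil]
        rw [List.getLast_singleton]
        exact hnt
      · rw [List.getLast_cons hne]
        exact ihlast hne
  · push_neg at h
    exact ⟨List.isChain_nil, fun _ => hdag.2.2.2.2 n (fun e => h e), by simp, by simp⟩

lemma fwd_t : fwd hdag t = [] := by
  rw [fwd_eq]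
  split_ifs with h
  · exact absurd h.choose_spec (hdag.2.2.1 _)
  · rfl

/-- canonical path from `s` to a node -/
noncomputable def bwd (hdag : IsDAG src tgt s t) : N → List E :=
  (wf_bwd hdag).fix (fun n ih =>
    if h : ∃ e, tgt e = n then
      ih (src h.choose) ⟨h.choose, rfl, h.choose_spec⟩ ++ [h.choose]
    else [])

lemma bwd_eq (n : N) : bwd hdag n =
    if h : ∃ e, tgt e = n then bwd hdag (src h.choose) ++ [h.choose] else [] := by
  unfold bwd
  rw [WellFounded.fix_eq]

lemma bwd_spec : ∀ n : N,
    ((bwd hdag n).Chain' fun e f => tgt e = src f) ∧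
    (bwd hdag n = [] → n = s) ∧
    (∀ h : bwd hdag n ≠ [], src ((bwd hdag n).head h) = s) ∧
    (∀ h : bwd hdag n ≠ [], tgt ((bwd hdag n).getLast h) = n) := by
  intro n
  induction n using (wf_bwd hdag).induction with
  | _ n ih =>
  rw [bwd_eq]
  split_ifs with h
  · set e := h.choose with he
    have htgt : tgt e = n := h.choose_spec
    obtain ⟨ihc, ihnil, ihhead, ihlast⟩ := ih (src e) ⟨e, rfl, htgt⟩
    refine ⟨?_, by simp, fun hne => ?_, fun _ => by rw [List.getLast_concat]; exact htgt⟩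
    · simp only [List.Chain']; rw [List.isChain_append]
      refine ⟨ihc, List.isChain_singleton _, fun x hx y hy => ?_⟩
      simp only [List.head?_cons, Option.mem_def, Option.some.injEq] at hy
      subst hy
      rcases eq_or_ne (bwd hdag (src e)) [] with hnil | hne
      · rw [hnil] at hx; simp at hx
      · rw [List.getLast?_eq_getLast hne] at hx
        have := Option.mem_def.1 hx
        rw [← Option.some.inj this]
        exact ihlast hne
    · rcases eq_or_ne (bwd hdag (src e)) [] with hnil | hne2
      · have hns : src e = s := ihnil hnil
        simp only [show bwd hdag (src h.choose) = [] from hnil, List.nil_append]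
        rw [List.head_cons]
        exact hns
      · rw [List.head_append_of_ne_nil hne2]
        exact ihhead hne2
  · push_neg at h
    exact ⟨List.isChain_nil, fun _ => hdag.2.2.2.1 n (fun e => h e), by simp, by simp⟩

end WF



/-- `a` is a potential initial segment of a path: a chain starting at `s` ending at `n`. -/
def IsPre (src tgt : E → N) (s : N) (a : List E) (n : N) : Prop :=
  (a.Chain' fun e f => tgt e = src f) ∧ (a = [] → n = s) ∧
  (∀ h : a ≠ [], src (a.head h) = s) ∧ (∀ h : a ≠ [], tgt (a.getLast h) = n)

variable (hdag : IsDAG src tgt s t) (hst : s ≠ t)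

lemma isPre_nil : IsPre src tgt s ([] : List E) s :=
  ⟨List.isChain_nil, fun _ => rfl, by simp, by simp⟩

lemma isPre_bwd (n : N) : IsPre src tgt s (bwd hdag n) n :=
  ⟨(bwd_spec hdag n).1, (bwd_spec hdag n).2.1, (bwd_spec hdag n).2.2.1,
    (bwd_spec hdag n).2.2.2⟩

omit hdag in
lemma isPre_concat {a : List E} {n : N} (ha : IsPre src tgt s a n) {e : E}
    (he : src e = n) : IsPre src tgt s (a ++ [e]) (tgt e) := by
  obtain ⟨hc, hnil, hhead, hlast⟩ := ha
  refine ⟨?_, by simp, fun h => ?_, fun h => by rw [List.getLast_concat]⟩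
  · simp only [List.Chain']; rw [List.isChain_append]
    refine ⟨hc, List.isChain_singleton _, fun x hx y hy => ?_⟩
    simp only [List.head?_cons, Option.mem_def, Option.some.injEq] at hy
    subst hy
    have hane : a ≠ [] := by rintro rfl; simp at hx
    rw [List.getLast?_eq_getLast hane] at hx
    rw [← Option.some.inj (Option.mem_def.1 hx), hlast hane, he]
  · rcases eq_or_ne a [] with rfl | hane
    · simp only [List.nil_append, List.head_cons]
      rw [he, hnil rfl]
    · rw [List.head_append_of_ne_nil hane]
      exact hhead hane

/-- a path given by an initial segment, completed canonically. -/
noncomputable def Kp (a : List E) (n : N) (ha : IsPre src tgt s a n) :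
    GPath src tgt s t where
  edges := a ++ fwd hdag n
  ne := by
    intro h
    rw [List.append_eq_nil_iff] at h
    exact hst ((ha.2.1 h.1).symm.trans ((fwd_spec hdag n).2.1 h.2))
  chain := by
    simp only [List.Chain']; rw [List.isChain_append]
    refine ⟨ha.1, (fwd_spec hdag n).1, fun x hx y hy => ?_⟩
    have hane : a ≠ [] := by rintro rfl; simp at hx
    have hfne : fwd hdag n ≠ [] := by rintro h; rw [h] at hy; simp at hy
    rw [List.getLast?_eq_getLast hane] at hx
    rw [List.head?_eq_head hfne] at hy
    rw [← Option.some.inj (Option.mem_def.1 hx), ← Option.some.inj (Option.mem_def.1 hy),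
      ha.2.2.2 hane, (fwd_spec hdag n).2.2.1 hfne]
  first := by
    rcases eq_or_ne a [] with rfl | hane
    · have hn : n = s := ha.2.1 rfl
      have hfne : fwd hdag n ≠ [] := fun h => hst (hn.symm.trans ((fwd_spec hdag n).2.1 h))
      simp only [List.nil_append]
      rw [(fwd_spec hdag n).2.2.1 _, hn]
    · rw [List.head_append_of_ne_nil hane]
      exact ha.2.2.1 hane
  last := by
    rcases eq_or_ne (fwd hdag n) [] with hnil | hfne
    · have hnt : n = t := (fwd_spec hdag n).2.1 hnil
      have hane : a ≠ [] := by
        rintro rfl; exact hst ((ha.2.1 rfl) ▸ hnt)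
      have h2 : ∀ h, (a ++ fwd hdag n).getLast h = a.getLast hane := by
        intro h
        apply Option.some.inj
        rw [← List.getLast?_eq_getLast, ← List.getLast?_eq_getLast, hnil, List.append_nil]
      rw [h2, ha.2.2.2 hane, hnt]
    · have h2 : ∀ h, (a ++ fwd hdag n).getLast h = (fwd hdag n).getLast hfne := by
        intro h
        apply Option.some.inj
        rw [← List.getLast?_eq_getLast, ← List.getLast?_eq_getLast,
          List.getLast?_append_of_ne_nil _ hfne]
      rw [h2]
      exact (fwd_spec hdag n).2.2.2 hfne

lemma Kp_edges (a : List E) (n : N) (ha : IsPre src tgt s a n) :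
    (Kp hdag hst a n ha).edges = a ++ fwd hdag n := rfl

/-- the fundamental vector associated to an edge -/
noncomputable def Dv (e : E) : GPath src tgt s t → ℝ :=
  indP src tgt s t (Kp hdag hst (bwd hdag (src e) ++ [e]) (tgt e)
      (isPre_concat (isPre_bwd hdag (src e)) rfl))
    - indP src tgt s t (Kp hdag hst (bwd hdag (src e)) (src e) (isPre_bwd hdag (src e)))

lemma key_mem {a : List E} {e : E} (ha : IsPre src tgt s a (src e)) :
    (indP src tgt s t (Kp hdag hst (a ++ [e]) (tgt e) (isPre_concat ha rfl))
      - indP src tgt s t (Kp hdag hst a (src e) ha))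
      - Dv hdag hst e ∈ RyserSub src tgt s t := by
  apply Submodule.subset_span
  refine ⟨src e, Kp hdag hst a (src e) ha,
    Kp hdag hst (bwd hdag (src e) ++ [e]) (tgt e)
      (isPre_concat (isPre_bwd hdag (src e)) rfl),
    Kp hdag hst (a ++ [e]) (tgt e) (isPre_concat ha rfl),
    Kp hdag hst (bwd hdag (src e)) (src e) (isPre_bwd hdag (src e)),
    ⟨a, fwd hdag (src e), bwd hdag (src e), e :: fwd hdag (tgt e), ?_, ?_, ?_, ?_⟩, ?_⟩
  · exact ⟨rfl, (fwd_spec hdag (src e)).2.2.1, (fwd_spec hdag (src e)).2.1⟩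
  · refine ⟨by rw [Kp_edges]; simp, fun h => by simp, by simp⟩
  · rw [Kp_edges]; simp
  · rw [Kp_edges]
  · unfold Dv; abel

/-- the canonical base path -/
noncomputable def P0 : GPath src tgt s t := Kp hdag hst [] s (isPre_nil)

lemma tele : ∀ (a : List E) (n : N) (ha : IsPre src tgt s a n),
    indP src tgt s t (Kp hdag hst a n ha) - indP src tgt s t (P0 hdag hst)
      - (a.map (Dv hdag hst)).sum ∈ RyserSub src tgt s t := by
  intro a
  induction a using List.reverseRecOn with
  | nil =>
    intro n ha
    have hn : n = s := ha.2.1 rfl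
    subst hn
    have hK : Kp hdag hst [] n ha = P0 hdag hst := rfl
    rw [hK]
    simp only [List.map_nil, List.sum_nil, sub_self, sub_zero]
    exact Submodule.zero_mem _
  | append_singleton l e ihl =>
    intro n ha
    have hn : n = tgt e := by
      have h := ha.2.2.2 (by simp)
      rw [List.getLast_concat] at h
      exact h.symm
    subst hn
    have hpre : IsPre src tgt s l (src e) := by
      obtain ⟨hc, hnil, hhead, hlast⟩ := ha
      simp only [List.Chain'] at hc; rw [List.isChain_append] at hc
      refine ⟨hc.1, fun hl => ?_, fun h => ?_, fun h => ?_⟩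
      · subst hl
        have := hhead (by simp)
        simpa using this
      · have := hhead (by simp)
        rwa [List.head_append_of_ne_nil h] at this
      · have := hc.2.2 _ (by rw [List.getLast?_eq_getLast h]; rfl) e (by simp)
        exact this
    have h1 := key_mem hdag hst hpre
    have h2 := ihl (src e) hpre
    have hK : Kp hdag hst (l ++ [e]) (tgt e) ha
        = Kp hdag hst (l ++ [e]) (tgt e) (isPre_concat hpre rfl) := rfl
    rw [hK]
    have heq : indP src tgt s t (Kp hdag hst (l ++ [e]) (tgt e) (isPre_concat hpre rfl))
        - indP src tgt s t (P0 hdag hst) - ((l ++ [e]).map (Dv hdag hst)).sum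
        = ((indP src tgt s t (Kp hdag hst (l ++ [e]) (tgt e) (isPre_concat hpre rfl))
            - indP src tgt s t (Kp hdag hst l (src e) hpre)) - Dv hdag hst e)
          + (indP src tgt s t (Kp hdag hst l (src e) hpre) - indP src tgt s t (P0 hdag hst)
            - (l.map (Dv hdag hst)).sum) := by
      rw [List.map_append, List.sum_append]
      simp only [List.map_cons, List.map_nil, List.sum_cons, List.sum_nil, add_zero]
      abel
    rw [heq]
    exact Submodule.add_mem _ h1 h2

lemma tele_path (P : GPath src tgt s t) :
    indP src tgt s t P - indP src tgt s t (P0 hdag hst)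
      - (P.edges.map (Dv hdag hst)).sum ∈ RyserSub src tgt s t := by
  have hpre : IsPre src tgt s P.edges t :=
    ⟨P.chain, fun h => absurd h P.ne, fun _ => P.first, fun _ => P.last⟩
  have hK : Kp hdag hst P.edges t hpre = P :=
    GPath.ext' (by rw [Kp_edges, fwd_t hdag, List.append_nil])
  have := tele hdag hst P.edges t hpre
  rwa [hK] at this


omit hst

omit hdag in
lemma list_sum_eq {M : Type*} [AddCommMonoid M] {l : List E} (hl : l.Nodup) (f : E → M) :
    (l.map f).sum = ∑ e : E, if e ∈ l then f e else 0 := by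
  rw [← Finset.sum_filter]
  have : Finset.univ.filter (fun e => e ∈ l) = l.toFinset := by
    ext x; simp
  rw [this]
  rw [List.sum_toFinset _ hl]

include hdag in
lemma marg_mem_span [Fintype (GPath src tgt s t)] {δ : GPath src tgt s t → ℝ}
    (hm : ∀ e : E, (∑ P : GPath src tgt s t, if e ∈ P.edges then δ P else 0) = 0) :
    δ ∈ RyserSub src tgt s t := by
  by_cases hE : IsEmpty (GPath src tgt s t)
  · have : δ = 0 := funext fun P => hE.elim P
    rw [this]; exact Submodule.zero_mem _
  · obtain ⟨Pw⟩ := not_isEmpty_iff.1 hE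
    have hst : s ≠ t := fun h => hdag.2.2.1 (Pw.edges.head Pw.ne) (h ▸ Pw.first)
    -- total mass is zero
    have huniq : ∀ P : GPath src tgt s t,
        (Finset.univ.filter fun e => src e = s ∧ e ∈ P.edges) = {P.edges.head P.ne} := by
      intro P
      refine Finset.eq_singleton_iff_unique_mem.2
        ⟨by simp [P.first, List.head_mem], fun x hx => ?_⟩
      simp only [Finset.mem_filter] at hx
      exact src_inj_of_chain hdag.1 P.chain hx.2.2 (List.head_mem P.ne)
        (hx.2.1.trans P.first.symm)
    have hsum : (∑ P : GPath src tgt s t, δ P) = 0 := by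
      calc (∑ P : GPath src tgt s t, δ P)
          = ∑ P : GPath src tgt s t, ∑ e : E, if src e = s ∧ e ∈ P.edges then δ P else 0 := by
            refine Finset.sum_congr rfl fun P _ => ?_
            rw [← Finset.sum_filter, huniq P, Finset.sum_singleton]
        _ = ∑ e : E, ∑ P : GPath src tgt s t, if src e = s ∧ e ∈ P.edges then δ P else 0 :=
            Finset.sum_comm
        _ = 0 := by
            refine Finset.sum_eq_zero fun e _ => ?_
            by_cases h : src e = s
            · rw [Finset.sum_congr rfl fun P _ => show (if src e = s ∧ e ∈ P.edges then δ P else 0)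
                  = if e ∈ P.edges then δ P else 0 by simp [h]]
              exact hm e
            · exact Finset.sum_eq_zero fun P _ => by simp [h]
    have hrepr : δ = ∑ P : GPath src tgt s t, δ P • indP src tgt s t P := by
      funext Q
      rw [Finset.sum_apply]
      simp only [Pi.smul_apply, indP, smul_eq_mul, mul_ite, mul_one, mul_zero]
      rw [Finset.sum_ite_eq Finset.univ Q δ]
      simp
    set w : GPath src tgt s t → (GPath src tgt s t → ℝ) := fun P =>
      indP src tgt s t P - indP src tgt s t (P0 hdag hst)
        - (P.edges.map (Dv hdag hst)).sum with hw
    have hterm : ∀ P : GPath src tgt s t, δ P • indP src tgt s t P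
        = δ P • w P + δ P • indP src tgt s t (P0 hdag hst)
          + δ P • (P.edges.map (Dv hdag hst)).sum := by
      intro P
      rw [hw]
      simp only [smul_sub]
      abel
    have h3 : (∑ P : GPath src tgt s t, δ P • (P.edges.map (Dv hdag hst)).sum) = 0 := by
      calc (∑ P : GPath src tgt s t, δ P • (P.edges.map (Dv hdag hst)).sum)
          = ∑ P : GPath src tgt s t, ∑ e : E,
              (if e ∈ P.edges then δ P else 0) • Dv hdag hst e := by
            refine Finset.sum_congr rfl fun P _ => ?_
            rw [list_sum_eq (nodup_of_chain hdag.1 P.chain), Finset.smul_sum]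
            refine Finset.sum_congr rfl fun e _ => ?_
            split_ifs <;> simp
        _ = ∑ e : E, (∑ P : GPath src tgt s t, if e ∈ P.edges then δ P else 0)
              • Dv hdag hst e := by
            rw [Finset.sum_comm]
            refine Finset.sum_congr rfl fun e _ => ?_
            rw [Finset.sum_smul]
        _ = 0 := by
            refine Finset.sum_eq_zero fun e _ => ?_
            rw [hm e, zero_smul]
    have h2 : (∑ P : GPath src tgt s t, δ P • indP src tgt s t (P0 hdag hst))
        = (0 : GPath src tgt s t → ℝ) := by
      rw [← Finset.sum_smul, hsum, zero_smul]
    have : δ = ∑ P : GPath src tgt s t, δ P • w P := by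
      calc δ = ∑ P : GPath src tgt s t, δ P • indP src tgt s t P := hrepr
        _ = ∑ P : GPath src tgt s t, (δ P • w P + δ P • indP src tgt s t (P0 hdag hst)
              + δ P • (P.edges.map (Dv hdag hst)).sum) :=
            Finset.sum_congr rfl fun P _ => hterm P
        _ = (∑ P : GPath src tgt s t, δ P • w P)
            + (∑ P : GPath src tgt s t, δ P • indP src tgt s t (P0 hdag hst))
            + (∑ P : GPath src tgt s t, δ P • (P.edges.map (Dv hdag hst)).sum) := by
            rw [Finset.sum_add_distrib, Finset.sum_add_distrib]
        _ = ∑ P : GPath src tgt s t, δ P • w P := by rw [h2, h3]; simp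
    rw [this]
    exact Submodule.sum_smul_mem _ _ fun P _ => tele_path hdag hst P


omit hdag

lemma isRyserSwap_neg {R : GPath src tgt s t → ℝ} (hR : IsRyserSwap src tgt s t R) :
    IsRyserSwap src tgt s t (-R) := by
  obtain ⟨n, P₁, P₂, Q₁, Q₂, ⟨a₁, b₁, a₂, b₂, hs₁, hs₂, hq₁, hq₂⟩, rfl⟩ := hR
  exact ⟨n, Q₁, Q₂, P₁, P₂, ⟨a₁, b₂, a₂, b₁, ⟨hq₁, hs₂.2.1, hs₂.2.2⟩,
    ⟨hq₂, hs₁.2.1, hs₁.2.2⟩, hs₁.1, hs₂.1⟩, by abel⟩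

lemma span_to_combo {δ : GPath src tgt s t → ℝ} (hδ : δ ∈ RyserSub src tgt s t) :
    ∃ (m : ℕ) (c : Fin m → ℝ) (R : Fin m → (GPath src tgt s t → ℝ)),
      (∀ i, 0 < c i ∧ IsRyserSwap src tgt s t (R i)) ∧ (∑ i, c i • R i) = δ := by
  rw [RyserSub, Submodule.mem_span_set] at hδ
  obtain ⟨c, hsupp, hsum⟩ := hδ
  classical
  refine ⟨c.support.card, fun i => |c (c.support.equivFin.symm i).1|,
    fun i => if 0 < c (c.support.equivFin.symm i).1 then ((c.support.equivFin.symm i).1)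
      else -((c.support.equivFin.symm i).1), fun i => ⟨?_, ?_⟩, ?_⟩
  · have := (c.support.equivFin.symm i).2
    rw [Finsupp.mem_support_iff] at this
    exact abs_pos.2 this
  · have hmem : ((c.support.equivFin.symm i).1) ∈ {R | IsRyserSwap src tgt s t R} :=
      hsupp (c.support.equivFin.symm i).2
    simp only []
    split_ifs
    · exact hmem
    · exact isRyserSwap_neg hmem
  · have hterm : ∀ v : {x // x ∈ c.support},
        |c v.1| • (if 0 < c v.1 then (v.1 : GPath src tgt s t → ℝ) else -v.1)
          = c v.1 • v.1 := by
      intro v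
      split_ifs with h
      · rw [abs_of_pos h]
      · push_neg at h
        rw [abs_of_nonpos h, smul_neg, ← neg_smul, neg_neg]
    calc (∑ i : Fin c.support.card, |c (c.support.equivFin.symm i).1|
          • (if 0 < c (c.support.equivFin.symm i).1
              then ((c.support.equivFin.symm i).1 : GPath src tgt s t → ℝ)
              else -((c.support.equivFin.symm i).1)))
        = ∑ v : {x // x ∈ c.support}, c v.1 • v.1 := by
          rw [← Equiv.sum_comp c.support.equivFin.symm
            (fun v : {x // x ∈ c.support} => c v.1 • (v.1 : GPath src tgt s t → ℝ))]
          exact Finset.sum_congr rfl fun i _ => hterm _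
      _ = ∑ v ∈ c.support, c v • v := Finset.sum_coe_sort c.support (fun v => c v • v)
      _ = δ := by rw [← hsum]; rfl

include hdag in
lemma count_lemma' [Fintype (GPath src tgt s t)] {n : N} (hns : n ≠ s) (hnt : n ≠ t)
    (g : GPath src tgt s t → ℝ) :
    (∑ e : E, if tgt e = n then (∑ P : GPath src tgt s t, if e ∈ P.edges then g P else 0) else 0)
    = ∑ e : E, if src e = n then (∑ P : GPath src tgt s t, if e ∈ P.edges then g P else 0) else 0 := by
  have step1 : ∀ (h : E → N), (∑ e : E, if h e = n then (∑ P : GPath src tgt s t, if e ∈ P.edges then g P else 0) else 0)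
      = ∑ P : GPath src tgt s t, ∑ e : E, if h e = n ∧ e ∈ P.edges then g P else 0 := by
    intro h
    rw [← Finset.sum_comm]
    refine Finset.sum_congr rfl fun e _ => ?_
    by_cases hc : h e = n
    · simp only [hc, if_true, true_and]
    · simp only [hc, if_false, false_and]
      exact (Finset.sum_eq_zero fun P _ => rfl).symm
  rw [step1 tgt, step1 src]
  exact Finset.sum_congr rfl fun P _ => count_lemma hdag P hns hnt (g P)



end Aux

theorem statement12 (hdag : IsDAG src tgt s t)
    (π π' : GPath src tgt s t → ℝ)
    (hπ : IsDistP src tgt s t π) (hπ' : IsDistP src tgt s t π') :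
    (∃ f : E → ℝ, IsQuasiFlow src tgt s t f ∧
        IsPathDecomp src tgt s t f π ∧ IsPathDecomp src tgt s t f π') ↔
      (∃ (m : ℕ) (c : Fin m → ℝ) (R : Fin m → (GPath src tgt s t → ℝ)),
        (∀ i, 0 < c i ∧ IsRyserSwap src tgt s t (R i)) ∧
        π + ∑ i, c i • R i = π') := by
  haveI := finite_gpath hdag
  letI : Fintype (GPath src tgt s t) := Fintype.ofFinite _
  constructor
  · rintro ⟨f, _hf, hπd, hπ'd⟩
    have hm : ∀ e : E,
        (∑ P : GPath src tgt s t, if e ∈ P.edges then (π' - π) P else 0) = 0 := by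
      intro e
      have h1 := hπd.2 e
      have h2 := hπ'd.2 e
      rw [finsum_eq_sum_of_fintype] at h1 h2
      have hsplit : ∀ P : GPath src tgt s t, (if e ∈ P.edges then (π' - π) P else 0)
          = (if e ∈ P.edges then π' P else 0) - (if e ∈ P.edges then π P else 0) := by
        intro P; split_ifs <;> simp
      rw [Finset.sum_congr rfl fun P _ => hsplit P, Finset.sum_sub_distrib, ← h1, ← h2,
        sub_self]
    obtain ⟨m, c, R, hcs, hsum⟩ := span_to_combo (marg_mem_span hdag hm)
    refine ⟨m, c, R, hcs, ?_⟩
    rw [hsum]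
    abel
  · rintro ⟨m, c, R, hcs, hsum⟩
    refine ⟨fun e => ∑ P : GPath src tgt s t, if e ∈ P.edges then π P else 0,
      ⟨?_, ?_⟩, ⟨hπ.1, ?_⟩, ⟨hπ'.1, ?_⟩⟩
    · intro e
      refine Finset.sum_nonneg fun P _ => ?_
      split_ifs
      · exact hπ.1 P
      · exact le_refl 0
    · intro n hns hnt
      exact count_lemma' hdag hns hnt π
    · intro e
      rw [finsum_eq_sum_of_fintype]
    · intro e
      rw [finsum_eq_sum_of_fintype]
      have hπ'eq : ∀ P, π' P = π P + ∑ i, c i * R i P := by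
        intro P
        rw [← hsum]
        simp [Finset.sum_apply]
      have hsplit : ∀ P : GPath src tgt s t, (if e ∈ P.edges then π' P else 0)
          = (if e ∈ P.edges then π P else 0)
            + ∑ i, c i * (if e ∈ P.edges then R i P else 0) := by
        intro P
        rw [hπ'eq P]
        split_ifs
        · rfl
        · simp
      rw [Finset.sum_congr rfl fun P _ => hsplit P, Finset.sum_add_distrib]
      rw [Finset.sum_comm]
      have hz : ∀ i : Fin m, (∑ P : GPath src tgt s t, c i * (if e ∈ P.edges then R i P else 0)) = 0 := by
        intro i
        rw [← Finset.mul_sum, swap_marg hdag (hcs i).2 e, mul_zero]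
      rw [Finset.sum_congr rfl fun i _ => hz i, Finset.sum_const, smul_zero, add_zero]

end StmtDAG
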